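/- Let p ≥ 2 be an integer and β > β_0 > β*(p), and let X = (X_1,…,X_n) be distributed according to the p-tensor Curie-Weiss model P_{β_0,p} on {−1,1}^n. Then lim_{n→∞} (1/n) log P_{β_0,p}(X̄_n > m_*(β,p)) = sup_{x ∈ (m_*(β,p), 1]} H_{β_0,p}(x) − sup_{x∈[−1,1]} H_{β_0,p}(x), and this limit is strictly negative. -/

import Mathlib

open Real Set Filter

/-- `I(x) = ½[(1+x)log(1+x) + (1−x)log(1−x)]` (with `Real.log 0 = 0`). -/
noncomputable def bahI (x : ℝ) : ℝ :=
  ((1 + x) * Real.log (1 + x) + (1 - x) * Real.log (1 - x)) / 2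

/-- `H_{β,p}(x) = β xᵖ − I(x)`. -/
noncomputable def bahH (β : ℝ) (p : ℕ) (x : ℝ) : ℝ := β * x ^ p - bahI x

/-- `β*(p) = sup {β ≥ 0 : sup_{x∈[−1,1]} H_{β,p}(x) = 0}`. -/
noncomputable def betaStar (p : ℕ) : ℝ :=
  sSup {β : ℝ | 0 ≤ β ∧ sSup (bahH β p '' Set.Icc (-1 : ℝ) 1) = 0}

/-- inverse hyperbolic tangent. -/
noncomputable def arctanh (x : ℝ) : ℝ := Real.log ((1 + x) / (1 - x)) / 2

/-- `η_p(t) = p⁻¹ t^{1−p} arctanh t` for `t ≠ 0`, and `η_p(0) = 0`. -/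
noncomputable def etaFn (p : ℕ) (t : ℝ) : ℝ :=
  if t = 0 then 0 else (p : ℝ)⁻¹ * t ^ (1 - (p : ℤ)) * arctanh t

/-- The spin value of a Boolean coordinate: `true ↦ 1`, `false ↦ −1`. -/
noncomputable def spin (b : Bool) : ℝ := if b then 1 else -1

/-- The average magnetization `X̄ = n⁻¹ Σᵢ Xᵢ` of a configuration in `{−1,1}ⁿ`. -/
noncomputable def mag {n : ℕ} (σ : Fin n → Bool) : ℝ := (∑ i, spin (σ i)) / n

/-- The unnormalized Curie–Weiss weight `exp(β n^{1−p} (Σᵢ xᵢ)ᵖ)` of a configuration. -/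
noncomputable def cwWeight (β : ℝ) (p n : ℕ) (σ : Fin n → Bool) : ℝ :=
  Real.exp (β * (n : ℝ) ^ (1 - (p : ℤ)) * (∑ i, spin (σ i)) ^ p)

/-- The probability of the event `E` under the `p`-tensor Curie–Weiss model `P_{β,p}`
on `{−1,1}ⁿ` (the normalizations `2ⁿ Z_n(β,p)` cancel in this ratio). -/
noncomputable def cwProb (β : ℝ) (p n : ℕ) (E : Set (Fin n → Bool)) : ℝ :=
  (∑ σ : Fin n → Bool, E.indicator (cwWeight β p n) σ)
    / ∑ σ : Fin n → Bool, cwWeight β p n σ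

section BahadurRao

def cntB {n : ℕ} (σ : Fin n → Bool) : ℕ := (Finset.univ.filter fun i => σ i = true).card

lemma cntB_le {n : ℕ} (σ : Fin n → Bool) : cntB σ ≤ n := by
  simpa [cntB] using (Finset.card_filter_le Finset.univ fun i => σ i = true)

lemma sum_spin_eq {n : ℕ} (σ : Fin n → Bool) :
    (∑ i, spin (σ i)) = 2 * (cntB σ : ℝ) - n := by
  rw [← Finset.sum_filter_add_sum_filter_not Finset.univ (fun i => σ i = true)]
  have h1 : ∀ i ∈ Finset.univ.filter fun i => σ i = true, spin (σ i) = 1 := by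
    intro i hi; simp only [Finset.mem_filter] at hi; simp [spin, hi.2]
  have h2 : ∀ i ∈ Finset.univ.filter fun i => ¬ (σ i = true), spin (σ i) = -1 := by
    intro i hi; simp only [Finset.mem_filter] at hi
    simp [spin, hi.2]
  rw [Finset.sum_congr rfl h1, Finset.sum_congr rfl h2]
  have hcard : (Finset.univ.filter fun i => ¬ (σ i = true)).card = n - cntB σ := by
    rw [Finset.filter_not, Finset.card_sdiff_of_subset (Finset.filter_subset _ _)]
    simp [cntB]
  simp only [Finset.sum_const, nsmul_eq_mul, hcard, cntB]
  have h := cntB_le σ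
  simp only [cntB] at h
  rw [Nat.cast_sub h]
  push_cast
  ring


lemma card_cntB (n k : ℕ) :
    (Finset.univ.filter fun σ : Fin n → Bool => cntB σ = k).card = n.choose k := by
  have hc : n.choose k = ((Finset.univ : Finset (Fin n)).powersetCard k).card := by
    rw [Finset.card_powersetCard]; simp
  rw [hc]
  apply Finset.card_bij (fun σ _ => Finset.univ.filter fun i => σ i = true)
  · intro σ hσ
    simp only [Finset.mem_filter, Finset.mem_univ, true_and] at hσ
    simp only [Finset.mem_powersetCard]
    exact ⟨Finset.subset_univ _, hσ⟩
  · intro a ha b hb hab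
    simp only [Finset.mem_filter] at ha hb
    funext i
    have := Finset.ext_iff.mp hab i
    simp only [Finset.mem_filter, Finset.mem_univ, true_and] at this
    by_cases h : a i <;> by_cases h' : b i <;> simp_all
  · intro s hs
    refine ⟨fun i => i ∈ s, ?_, ?_⟩
    · simp only [Finset.mem_powersetCard] at hs
      rw [Finset.mem_filter]
      refine ⟨Finset.mem_univ _, ?_⟩
      simp [cntB, hs.2]
    · ext i; simp

lemma sum_over_bool (n : ℕ) (g : ℕ → ℝ) :
    (∑ σ : Fin n → Bool, g (cntB σ)) =
      ∑ k ∈ Finset.range (n + 1), (n.choose k : ℝ) * g k := by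
  rw [← Finset.sum_fiberwise_of_maps_to (g := fun σ : Fin n → Bool => cntB σ)
      (fun σ _ => Finset.mem_range.mpr (Nat.lt_succ_of_le (by
        simpa [cntB] using (Finset.card_filter_le Finset.univ fun i => σ i = true))))]
  refine Finset.sum_congr rfl fun k _ => ?_
  rw [Finset.sum_congr rfl (fun σ hσ => by
    simp only [Finset.mem_filter] at hσ; rw [hσ.2]), Finset.sum_const, card_cntB]
  simp [mul_comm]


lemma binom_sum (n k : ℕ) (hk : k ≤ n) :
    (∑ j ∈ Finset.range (n + 1), n.choose j * k ^ j * (n - k) ^ (n - j)) = n ^ n := by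
  have := add_pow k (n - k) n
  rw [Nat.add_sub_cancel' hk] at this
  rw [this]
  refine Finset.sum_congr rfl fun j _ => by push_cast; ring

lemma maxterm_step_up (n k j : ℕ) (hj : j < k) (hk : k ≤ n) :
    n.choose j * k ^ j * (n - k) ^ (n - j) ≤ n.choose (j+1) * k ^ (j+1) * (n - k) ^ (n - (j+1)) := by
  have hjn : j < n := lt_of_lt_of_le hj hk
  have hpow : (n - k) ^ (n - j) = (n - k) * (n - k) ^ (n - (j+1)) := by
    rw [← pow_succ']
    congr 1
    omega
  refine Nat.le_of_mul_le_mul_left ?_ (Nat.succ_pos j)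
  calc (j+1) * (n.choose j * k ^ j * (n - k) ^ (n - j))
        = (n.choose j * (j+1) * (n-k)) * (k ^ j * (n - k) ^ (n - (j+1))) := by
          rw [hpow]; ring
      _ ≤ (n.choose j * (n - j) * k) * (k ^ j * (n - k) ^ (n - (j+1))) := by
          apply Nat.mul_le_mul_right
          rw [mul_assoc, mul_assoc]
          apply Nat.mul_le_mul_left
          exact le_of_le_of_eq (Nat.mul_le_mul hj (Nat.sub_le_sub_left (le_of_lt hj) n))
            (mul_comm _ _)
      _ = (j+1) * (n.choose (j+1) * k ^ (j+1) * (n - k) ^ (n - (j+1))) := by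
          rw [← Nat.choose_succ_right_eq]
          ring

lemma maxterm_step_down (n k j : ℕ) (hj : k ≤ j) (hk : k ≤ n) :
    n.choose (j+1) * k ^ (j+1) * (n - k) ^ (n - (j+1)) ≤ n.choose j * k ^ j * (n - k) ^ (n - j) := by
  rcases Nat.lt_or_ge j n with hjn | hjn
  · have hpow : (n - k) ^ (n - j) = (n - k) * (n - k) ^ (n - (j+1)) := by
      rw [← pow_succ']
      congr 1
      omega
    refine Nat.le_of_mul_le_mul_left ?_ (Nat.succ_pos j)
    calc (j+1) * (n.choose (j+1) * k ^ (j+1) * (n - k) ^ (n - (j+1)))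
        = (n.choose j * (n - j) * k) * (k ^ j * (n - k) ^ (n - (j+1))) := by
          rw [← Nat.choose_succ_right_eq]; ring
      _ ≤ (n.choose j * (j+1) * (n-k)) * (k ^ j * (n - k) ^ (n - (j+1))) := by
          apply Nat.mul_le_mul_right
          rw [mul_assoc, mul_assoc]
          apply Nat.mul_le_mul_left
          exact le_of_le_of_eq
            (Nat.mul_le_mul (Nat.sub_le_sub_left hj n) (Nat.le_succ_of_le hj)) (mul_comm _ _)
      _ = (j+1) * (n.choose j * k ^ j * (n - k) ^ (n - j)) := by
          rw [hpow]; ring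
  · have : n.choose (j+1) = 0 := Nat.choose_eq_zero_of_lt (by omega)
    simp [this]

lemma maxterm (n k : ℕ) (hk : k ≤ n) (j : ℕ) :
    n.choose j * k ^ j * (n - k) ^ (n - j) ≤ n.choose k * k ^ k * (n - k) ^ (n - k) := by
  have up : ∀ d j, j + d = k →
      n.choose j * k ^ j * (n - k) ^ (n - j) ≤ n.choose k * k ^ k * (n - k) ^ (n - k) := by
    intro d
    induction d with
    | zero => intro j hj; simp only [Nat.add_zero] at hj; subst hj; exact le_refl _
    | succ d ih =>
      intro j hj
      exact le_trans (maxterm_step_up n k j (by omega) hk) (ih (j+1) (by omega))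
  have down : ∀ d,
      n.choose (k + d) * k ^ (k + d) * (n - k) ^ (n - (k + d)) ≤
        n.choose k * k ^ k * (n - k) ^ (n - k) := by
    intro d
    induction d with
    | zero => exact le_refl _
    | succ d ih =>
      have := maxterm_step_down n k (k + d) (by omega) hk
      calc n.choose (k + (d+1)) * k ^ (k + (d+1)) * (n - k) ^ (n - (k + (d+1)))
          = n.choose ((k+d)+1) * k ^ ((k+d)+1) * (n - k) ^ (n - ((k+d)+1)) := by ring_nf
        _ ≤ n.choose (k + d) * k ^ (k + d) * (n - k) ^ (n - (k + d)) := this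
        _ ≤ _ := ih
  rcases le_or_gt j k with h | h
  · exact up (k - j) j (by omega)
  · have : j = k + (j - k) := by omega
    rw [this]
    exact down (j - k)


noncomputable def enF (n k : ℕ) : ℝ :=
  (k : ℝ) * Real.log ((k : ℝ) / n) + ((n - k : ℕ) : ℝ) * Real.log (((n - k : ℕ) : ℝ) / n)

lemma exp_part (n k : ℕ) (hn : 0 < n) (hk : k ≤ n) :
    Real.exp (-((k : ℝ) * Real.log ((k : ℝ) / n))) * (k : ℝ) ^ k = (n : ℝ) ^ k := by
  rcases Nat.eq_zero_or_pos k with rfl | hk0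
  · simp
  · have h1 : (0:ℝ) < (k : ℝ) / n := by positivity
    rw [← Real.log_pow] at *
    rw [show -Real.log (((k:ℝ)/n) ^ k) = Real.log ((((k:ℝ)/n) ^ k)⁻¹) by rw [Real.log_inv],
      Real.exp_log (by positivity)]
    field_simp
    rw [div_pow, div_mul_cancel₀ _ (by positivity)]

lemma enF_key (n k : ℕ) (hn : 0 < n) (hk : k ≤ n) :
    Real.exp (-(enF n k)) * ((k : ℝ) ^ k * ((n - k : ℕ) : ℝ) ^ (n - k)) = (n : ℝ) ^ n := by
  have h1 := exp_part n k hn hk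
  have h2 := exp_part n (n - k) hn (Nat.sub_le n k)
  have : Real.exp (-(enF n k)) =
      Real.exp (-((k : ℝ) * Real.log ((k : ℝ) / n))) *
      Real.exp (-(((n - k : ℕ) : ℝ) * Real.log (((n - k : ℕ) : ℝ) / n))) := by
    rw [← Real.exp_add]; congr 1; simp [enF]; ring
  rw [this]
  calc Real.exp (-((k : ℝ) * Real.log ((k : ℝ) / n))) *
        Real.exp (-(((n - k : ℕ) : ℝ) * Real.log (((n - k : ℕ) : ℝ) / n))) *
        ((k : ℝ) ^ k * ((n - k : ℕ) : ℝ) ^ (n - k))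
      = (Real.exp (-((k : ℝ) * Real.log ((k : ℝ) / n))) * (k : ℝ) ^ k) *
        (Real.exp (-(((n - k : ℕ) : ℝ) * Real.log (((n - k : ℕ) : ℝ) / n))) *
          ((n - k : ℕ) : ℝ) ^ (n - k)) := by ring
    _ = (n : ℝ) ^ k * (n : ℝ) ^ (n - k) := by rw [h1, h2]
    _ = (n : ℝ) ^ n := by rw [← pow_add]; congr 1; omega


lemma enF_eq_bahI (n k : ℕ) (hn : 0 < n) (hk : k ≤ n) :
    (n : ℝ) * (Real.log 2 - bahI ((2 * k - n : ℝ) / n)) = -(enF n k) := by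
  have hn' : (0:ℝ) < n := by exact_mod_cast hn
  set x : ℝ := (2 * k - n : ℝ) / n with hx
  have h1x : 1 + x = 2 * k / n := by rw [hx]; field_simp; ring
  have h2x : 1 - x = 2 * ((n : ℝ) - k) / n := by rw [hx]; field_simp; ring
  have hnk : ((n - k : ℕ) : ℝ) = (n : ℝ) - k := by
    rw [Nat.cast_sub hk]
  have key : ∀ j : ℕ, j ≤ n →
      (2 * (j:ℝ) / n) * Real.log (2 * (j:ℝ) / n) =
        (2 * (j:ℝ) / n) * Real.log 2 + (2 * (j:ℝ) / n) * Real.log ((j:ℝ)/n) := by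
    intro j hj
    rcases Nat.eq_zero_or_pos j with rfl | hj0
    · simp
    · have : (0:ℝ) < (j:ℝ)/n := by positivity
      rw [show 2 * (j:ℝ) / n = 2 * ((j:ℝ)/n) by ring, Real.log_mul (by norm_num) (ne_of_gt this)]
      ring
  have e1 := key k hk
  have e2 := key (n - k) (Nat.sub_le n k)
  rw [hnk] at e2
  unfold bahI enF
  rw [hnk, h1x, h2x, e1, e2]
  field_simp
  ring


lemma A_pos (n k : ℕ) : (0:ℝ) < (k : ℝ) ^ k * ((n - k : ℕ) : ℝ) ^ (n - k) := by
  have h1 : (0:ℝ) < (k:ℝ)^k := by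
    rcases Nat.eq_zero_or_pos k with rfl | h
    · simp
    · positivity
  have h2 : (0:ℝ) < ((n - k : ℕ):ℝ)^(n-k) := by
    rcases Nat.eq_zero_or_pos (n - k) with h' | h'
    · rw [h']; simp [h']
    · positivity
  exact mul_pos h1 h2

lemma choose_upper (n k : ℕ) (hn : 0 < n) (hk : k ≤ n) :
    (n.choose k : ℝ) ≤ Real.exp ((n : ℝ) * (Real.log 2 - bahI ((2 * k - n : ℝ) / n))) := by
  rw [enF_eq_bahI n k hn hk]
  have hA := A_pos n k
  rw [← mul_le_mul_iff_of_pos_right hA]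
  rw [enF_key n k hn hk]
  have hNat : n.choose k * k ^ k * (n - k) ^ (n - k) ≤ n ^ n := by
    rw [← binom_sum n k hk]
    exact Finset.single_le_sum (f := fun j => n.choose j * k ^ j * (n - k) ^ (n - j)) (fun j _ => Nat.zero_le _)
      (Finset.mem_range.mpr (Nat.lt_succ_of_le hk))
  calc (n.choose k : ℝ) * ((k : ℝ) ^ k * ((n - k : ℕ) : ℝ) ^ (n - k))
      = ((n.choose k * k ^ k * (n - k) ^ (n - k) : ℕ) : ℝ) := by push_cast; ring
    _ ≤ ((n ^ n : ℕ) : ℝ) := by exact_mod_cast hNat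
    _ = (n : ℝ) ^ n := by push_cast; ring

lemma choose_lower (n k : ℕ) (hn : 0 < n) (hk : k ≤ n) :
    Real.exp ((n : ℝ) * (Real.log 2 - bahI ((2 * k - n : ℝ) / n))) ≤
      ((n : ℝ) + 1) * (n.choose k : ℝ) := by
  rw [enF_eq_bahI n k hn hk]
  have hA := A_pos n k
  rw [← mul_le_mul_iff_of_pos_right hA, enF_key n k hn hk]
  have hNat : n ^ n ≤ (n + 1) * (n.choose k * k ^ k * (n - k) ^ (n - k)) := by
    rw [← binom_sum n k hk]
    calc (∑ j ∈ Finset.range (n + 1), n.choose j * k ^ j * (n - k) ^ (n - j))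
        ≤ ∑ _j ∈ Finset.range (n + 1), n.choose k * k ^ k * (n - k) ^ (n - k) :=
          Finset.sum_le_sum (fun j _ => maxterm n k hk j)
      _ = (n + 1) * (n.choose k * k ^ k * (n - k) ^ (n - k)) := by
          rw [Finset.sum_const, Finset.card_range]; ring
  calc (n : ℝ) ^ n = ((n ^ n : ℕ) : ℝ) := by push_cast; ring
    _ ≤ (((n + 1) * (n.choose k * k ^ k * (n - k) ^ (n - k)) : ℕ) : ℝ) := by exact_mod_cast hNat
    _ = ((n : ℝ) + 1) * (n.choose k : ℝ) * ((k : ℝ) ^ k * ((n - k : ℕ) : ℝ) ^ (n - k)) := by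
        push_cast; ring


lemma bahI_continuous : Continuous bahI := by unfold bahI; fun_prop
lemma bahH_continuous (β : ℝ) (p : ℕ) : Continuous (bahH β p) :=
  (continuous_const.mul (continuous_pow p)).sub bahI_continuous

lemma mul_log_ge (c : ℝ) (hc : 0 ≤ c) : c - 1 ≤ c * Real.log c := by
  rcases eq_or_lt_of_le hc with h | h
  · simp [← h]
  · have h1 : Real.log c⁻¹ ≤ c⁻¹ - 1 := Real.log_le_sub_one_of_pos (by positivity)
    rw [Real.log_inv] at h1
    have h2 : 1 - c⁻¹ ≤ Real.log c := by linarith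
    have h3 := mul_le_mul_of_nonneg_left h2 (le_of_lt h)
    have h4 : c * (1 - c⁻¹) = c - 1 := by field_simp
    linarith

lemma bahI_nonneg (x : ℝ) (hx : x ∈ Set.Icc (-1:ℝ) 1) : 0 ≤ bahI x := by
  obtain ⟨h1, h2⟩ := hx
  have a1 := mul_log_ge (1 + x) (by linarith)
  have a2 := mul_log_ge (1 - x) (by linarith)
  unfold bahI
  linarith

lemma bahI_zero : bahI 0 = 0 := by simp [bahI]
lemma bahI_one : bahI 1 = Real.log 2 := by norm_num [bahI]

lemma bddAbove_image (f : ℝ → ℝ) (hf : Continuous f) (s : Set ℝ) (hs : IsCompact s) :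
    BddAbove (f '' s) := (hs.image hf).bddAbove

lemma betaStar_nonneg (p : ℕ) : 0 ≤ betaStar p := by
  unfold betaStar
  apply le_csSup
  · -- bddAbove
    refine ⟨Real.log 2, fun β hβ => ?_⟩
    obtain ⟨hβ0, hβs⟩ := hβ
    by_contra hlt
    push_neg at hlt
    have h1 : bahH β p 1 ≤ sSup (bahH β p '' Set.Icc (-1 : ℝ) 1) :=
      le_csSup (bddAbove_image _ (bahH_continuous β p) _ isCompact_Icc)
        ⟨1, by norm_num, rfl⟩
    rw [hβs] at h1
    have : bahH β p 1 = β - Real.log 2 := by simp [bahH, bahI_one]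
    linarith
  · refine ⟨le_refl 0, le_antisymm ?_ ?_⟩
    · apply csSup_le (by exact ⟨bahH 0 p 0, 0, by norm_num, rfl⟩)
      rintro y ⟨x, hx, rfl⟩
      have := bahI_nonneg x hx
      simp only [bahH]
      linarith
    · apply le_csSup (bddAbove_image _ (bahH_continuous 0 p) _ isCompact_Icc)
      exact ⟨0, by norm_num, by simp [bahH, bahI_zero]⟩

-- m < 1 for an interior maximizer
lemma max_lt_one (β : ℝ) (hβ : 0 ≤ β) (p : ℕ) (m : ℝ) (hm1 : m ∈ Set.Icc (-1:ℝ) 1)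
    (hmax : IsMaxOn (bahH β p) (Set.Icc (-1 : ℝ) 1) m) : m < 1 := by
  rcases lt_or_eq_of_le hm1.2 with h | h
  · exact h
  -- m = 1 : derive contradiction
  exfalso
  set ε : ℝ := min (1/2) (2 * Real.exp (-(2 * β * p + 1))) with hε
  have hε0 : 0 < ε := lt_min (by norm_num) (by positivity)
  have hε12 : ε ≤ 1/2 := min_le_left _ _
  have hεe : ε ≤ 2 * Real.exp (-(2 * β * p + 1)) := min_le_right _ _
  have hlog : 2 * β * p + 1 ≤ Real.log (2/ε) := by
    rw [show (2:ℝ)*β*p + 1 = Real.log (Real.exp (2*β*p+1)) by rw [Real.log_exp]]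
    apply Real.log_le_log (Real.exp_pos _)
    rw [le_div_iff₀ hε0]
    calc Real.exp (2*β*↑p+1) * ε ≤ Real.exp (2*β*↑p+1) * (2 * Real.exp (-(2 * β * ↑p + 1))) :=
          mul_le_mul_of_nonneg_left hεe (Real.exp_nonneg _)
      _ = 2 := by
          rw [mul_left_comm, ← Real.exp_add,
            show (2*β*↑p+1) + (-(2*β*↑p+1)) = 0 by ring, Real.exp_zero, mul_one]
  -- key : bahH β p (1-ε) > bahH β p 1
  have hBern : 1 - (p:ℝ) * ε ≤ (1 - ε)^p := by
    have := one_add_mul_le_pow (a := -ε) (by linarith) p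
    calc 1 - (p:ℝ)*ε = 1 + (p:ℝ)*(-ε) := by ring
      _ ≤ (1 + -ε)^p := this
      _ = (1-ε)^p := by ring_nf
  have hIval : bahI (1 - ε) = ((2-ε) * Real.log (2-ε) + ε * Real.log ε)/2 := by
    unfold bahI
    norm_num
    ring_nf
  have hent : Real.log 2 - bahI (1-ε) ≥ ε * Real.log (2/ε) / 2 := by
    rw [hIval]
    have e1 : Real.log (2-ε) ≤ Real.log 2 := Real.log_le_log (by linarith) (by linarith)
    have e2 : Real.log (2/ε) = Real.log 2 - Real.log ε := Real.log_div (by norm_num) (ne_of_gt hε0)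
    nlinarith [e1, mul_le_mul_of_nonneg_left e1 (by linarith : (0:ℝ) ≤ 2 - ε)]
  have hmem : (1 - ε) ∈ Set.Icc (-1:ℝ) 1 := by constructor <;> linarith
  have hcontr := hmax hmem
  simp only [Set.mem_setOf_eq, h] at hcontr
  -- hcontr : bahH β p (1-ε) ≤ bahH β p 1
  have hH1 : bahH β p 1 = β - Real.log 2 := by simp [bahH, bahI_one]
  have hHe : bahH β p (1-ε) = β * (1-ε)^p - bahI (1-ε) := rfl
  have hfinal : bahH β p (1-ε) - bahH β p 1 ≥ ε/2 := by
    rw [hHe, hH1]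
    have b1 : β * (1-ε)^p ≥ β - β*p*ε := by nlinarith [mul_le_mul_of_nonneg_left hBern hβ]
    have b2 : ε * Real.log (2/ε) / 2 ≥ ε * (2*β*p+1) / 2 := by
      apply div_le_div_of_nonneg_right _ (by norm_num)
      exact mul_le_mul_of_nonneg_left hlog (le_of_lt hε0)
    nlinarith
  linarith

lemma bahI_hasDeriv (x : ℝ) (h1 : -1 < x) (h2 : x < 1) :
    HasDerivAt bahI ((Real.log (1+x) - Real.log (1-x))/2) x := by
  have ha : HasDerivAt (fun y : ℝ => 1 + y) 1 x := by
    simpa using (hasDerivAt_id x).const_add 1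
  have hb : HasDerivAt (fun y : ℝ => 1 - y) (-1) x := by
    simpa using (hasDerivAt_id x).const_sub 1
  have hla : HasDerivAt (fun y : ℝ => Real.log (1+y)) (1/(1+x)) x := by
    simpa using ha.log (by linarith)
  have hlb : HasDerivAt (fun y : ℝ => Real.log (1-y)) (-1/(1-x)) x := by
    simpa using hb.log (by linarith)
  have hf : HasDerivAt (fun y : ℝ => (1+y) * Real.log (1+y))
      (1 * Real.log (1+x) + (1+x) * (1/(1+x))) x := ha.mul hla
  have hg : HasDerivAt (fun y : ℝ => (1-y) * Real.log (1-y))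
      ((-1) * Real.log (1-x) + (1-x) * (-1/(1-x))) x := hb.mul hlb
  have := (hf.add hg).div_const 2
  refine this.congr_deriv ?_
  have e1 : (1+x) * (1/(1+x)) = 1 := by
    rw [mul_one_div]; exact div_self (by linarith)
  have e2 : (1-x) * (-1/(1-x)) = -1 := by
    field_simp
    rw [div_self (by linarith : (1:ℝ)-x ≠ 0)]
  rw [e1, e2]
  ring

lemma bahH_hasDeriv (β : ℝ) (p : ℕ) (x : ℝ) (h1 : -1 < x) (h2 : x < 1) :
    HasDerivAt (bahH β p)
      (β * (p * x^(p-1)) - (Real.log (1+x) - Real.log (1-x))/2) x := by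
  have h := ((hasDerivAt_pow p x).const_mul β).sub (bahI_hasDeriv x h1 h2)
  exact h

-- strictly negative derivative at interior max gives a better point to the left
lemma exists_better_left (f : ℝ → ℝ) (x d : ℝ) (hd : d < 0) (hf : HasDerivAt f d x)
    (a : ℝ) (ha : a < x) : ∃ y, a < y ∧ y < x ∧ f x < f y := by
  have hs := hasDerivAt_iff_tendsto_slope.mp hf
  have hlt : ∀ᶠ z in nhdsWithin x {x}ᶜ, slope f x z < 0 :=
    hs.eventually_lt_const hd
  have hmem : Set.Ioo a x ∈ nhdsWithin x (Set.Iio x) :=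
    Ioo_mem_nhdsLT_of_mem (by constructor <;> linarith : x ∈ Set.Ioc a x)
  have hsub : nhdsWithin x (Set.Iio x) ≤ nhdsWithin x {x}ᶜ :=
    nhdsWithin_mono x (fun y hy => ne_of_lt hy)
  have hlt' : ∀ᶠ z in nhdsWithin x (Set.Iio x), slope f x z < 0 := hlt.filter_mono hsub
  have hmem' : ∀ᶠ z in nhdsWithin x (Set.Iio x), z ∈ Set.Ioo a x :=
    eventually_of_mem hmem (fun z hz => hz)
  have hne : (nhdsWithin x (Set.Iio x)).NeBot := nhdsLT_neBot x
  obtain ⟨y, hy1, hy2⟩ := (hlt'.and hmem').exists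
  refine ⟨y, hy2.1, hy2.2, ?_⟩
  have h := hy1
  rw [slope_def_field] at h
  have hxy : 0 < x - y := by linarith [hy2.2]
  rcases div_neg_iff.mp h with ⟨hnum, hden⟩ | ⟨hnum, hden⟩
  · linarith
  · linarith

lemma sup_lt (p : ℕ) (hp : 2 ≤ p) (β β₀ : ℝ) (h0 : betaStar p < β₀) (h1 : β₀ < β)
    (m : ℝ) (hm0 : 0 < m) (hm1 : m ∈ Set.Icc (-1 : ℝ) 1)
    (hmax : IsMaxOn (bahH β p) (Set.Icc (-1 : ℝ) 1) m) :
    sSup (bahH β₀ p '' Set.Ioc m 1) < sSup (bahH β₀ p '' Set.Icc (-1 : ℝ) 1) := by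
  have hβ0 : 0 ≤ β₀ := le_trans (betaStar_nonneg p) (le_of_lt h0)
  have hβ : 0 ≤ β := by linarith
  have hmlt1 : m < 1 := max_lt_one β hβ p m hm1 hmax
  have hmgt : -1 < m := by linarith
  have hloc : IsLocalMax (bahH β p) m := hmax.isLocalMax (Icc_mem_nhds hmgt hmlt1)
  have hdβ := bahH_hasDeriv β p m hmgt hmlt1
  have hzero := hloc.hasDerivAt_eq_zero hdβ
  have hdβ₀ := bahH_hasDeriv β₀ p m hmgt hmlt1
  have hppos : (0:ℝ) < (p:ℝ) * m^(p-1) := by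
    have : (0:ℝ) < (p:ℝ) := by positivity
    positivity
  have hdneg : β₀ * ((p:ℝ) * m^(p-1)) - (Real.log (1+m) - Real.log (1-m))/2 < 0 := by
    nlinarith [hzero]
  obtain ⟨x₀, hx₀0, hx₀m, hbetter⟩ := exists_better_left (bahH β₀ p) m _ hdneg hdβ₀ 0 hm0
  have hx₀Icc : x₀ ∈ Set.Icc (-1:ℝ) 1 := ⟨by linarith, by linarith⟩
  have hS2 : bahH β₀ p x₀ ≤ sSup (bahH β₀ p '' Set.Icc (-1:ℝ) 1) :=
    le_csSup (bddAbove_image _ (bahH_continuous β₀ p) _ isCompact_Icc) ⟨x₀, hx₀Icc, rfl⟩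
  have hS1 : sSup (bahH β₀ p '' Set.Ioc m 1) ≤ bahH β₀ p m := by
    apply csSup_le
    · exact ⟨bahH β₀ p ((m+1)/2), (m+1)/2, ⟨by linarith, by linarith⟩, rfl⟩
    · rintro y ⟨x, ⟨hxm, hx1⟩, rfl⟩
      have hIcc : x ∈ Set.Icc (-1:ℝ) 1 := ⟨by linarith, hx1⟩
      have hmax' := hmax hIcc
      simp only [Set.mem_setOf_eq] at hmax'
      have hpow : m^p < x^p := by
        apply pow_lt_pow_left₀ hxm (le_of_lt hm0)
        omega
      have hmul : (β - β₀) * m^p < (β - β₀) * x^p :=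
        mul_lt_mul_of_pos_left hpow (by linarith)
      have e1 : bahH β₀ p x = bahH β p x - (β - β₀) * x^p := by unfold bahH; ring
      have e2 : bahH β₀ p m = bahH β p m - (β - β₀) * m^p := by unfold bahH; ring
      rw [e1, e2]
      linarith
  linarith


lemma sup_Icc_attained (β₀ : ℝ) (p : ℕ) :
    ∃ x, x ∈ Set.Icc (-1:ℝ) 1 ∧ IsMaxOn (bahH β₀ p) (Set.Icc (-1:ℝ) 1) x ∧
      sSup (bahH β₀ p '' Set.Icc (-1:ℝ) 1) = bahH β₀ p x := by
  obtain ⟨x, hx, hmax⟩ := isCompact_Icc.exists_isMaxOn (by norm_num : (Set.Icc (-1:ℝ) 1).Nonempty)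
    (bahH_continuous β₀ p).continuousOn
  refine ⟨x, hx, hmax, ?_⟩
  apply IsGreatest.csSup_eq
  exact ⟨⟨x, hx, rfl⟩, by rintro y ⟨z, hz, rfl⟩; exact hmax hz⟩

lemma sup_Ioc_attained (β₀ : ℝ) (p : ℕ) (m : ℝ) (hm : m < 1) :
    ∃ x, x ∈ Set.Icc m 1 ∧ sSup (bahH β₀ p '' Set.Ioc m 1) = bahH β₀ p x ∧
      (∀ y ∈ Set.Ioc m 1, bahH β₀ p y ≤ bahH β₀ p x) := by
  obtain ⟨x, hx, hmax⟩ := isCompact_Icc.exists_isMaxOn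
    (Set.nonempty_Icc.mpr (le_of_lt hm)) (bahH_continuous β₀ p).continuousOn
  have hub : ∀ y ∈ Set.Ioc m 1, bahH β₀ p y ≤ bahH β₀ p x := by
    intro y hy
    exact hmax ⟨le_of_lt hy.1, hy.2⟩
  refine ⟨x, hx, le_antisymm ?_ ?_, hub⟩
  · refine csSup_le ⟨bahH β₀ p ((m+1)/2), ⟨(m+1)/2, ⟨by linarith, by linarith⟩, rfl⟩⟩ ?_
    rintro y ⟨z, hz, rfl⟩
    exact hub z hz
  · have hbdd : BddAbove (bahH β₀ p '' Set.Ioc m 1) := by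
      apply BddAbove.mono (Set.image_mono Set.Ioc_subset_Icc_self)
      exact bddAbove_image _ (bahH_continuous β₀ p) _ isCompact_Icc
    rcases lt_or_eq_of_le hx.1 with h | h
    · exact le_csSup hbdd ⟨x, ⟨h, hx.2⟩, rfl⟩
    · -- x = m : approximate from the right
      apply le_of_forall_pos_le_add
      intro ε hε
      have hc : ContinuousAt (bahH β₀ p) x := (bahH_continuous β₀ p).continuousAt
      rw [Metric.continuousAt_iff] at hc
      obtain ⟨δ, hδ0, hδ⟩ := hc ε hε
      set y := m + min (δ/2) ((1-m)/2) with hy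
      have hc0 : 0 < min (δ/2) ((1-m)/2) := lt_min (by linarith) (by linarith)
      have hyIoc : y ∈ Set.Ioc m 1 := by
        constructor
        · simp only [hy]; linarith
        · have := min_le_right (δ/2) ((1-m)/2); simp only [hy]; linarith
      have hdist : dist y x < δ := by
        rw [Real.dist_eq, ← h]
        have h1 := min_le_left (δ/2) ((1-m)/2)
        rw [abs_of_pos (by simp only [hy]; linarith)]
        simp only [hy]
        linarith
      have := hδ hdist
      rw [Real.dist_eq, abs_lt] at this
      have hle : bahH β₀ p y ≤ sSup (bahH β₀ p '' Set.Ioc m 1) :=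
        le_csSup hbdd ⟨y, hyIoc, rfl⟩
      linarith


noncomputable def xg (n k : ℕ) : ℝ := (2 * (k:ℝ) - n) / n



lemma grid (x : ℝ) (hx0 : -1 ≤ x) (hx1 : x < 1) (n : ℕ) (hn : 0 < n) :
    ∃ k, k ≤ n ∧ x < xg n k ∧ xg n k ≤ x + 2 / n := by
  have hn' : (0:ℝ) < n := by exact_mod_cast hn
  rcases le_or_gt (1 + x) 0 with hneg | hpos
  · refine ⟨1, hn, ?_, ?_⟩
    · unfold xg
      push_cast
      rw [lt_div_iff₀ hn']
      nlinarith
    · unfold xg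
      push_cast
      rw [div_le_iff₀ hn']
      have : (x + 2/(n:ℝ)) * n = x * n + 2 := by field_simp
      rw [this]
      nlinarith
  · set t : ℝ := n * (1 + x) / 2 with ht
    have ht0 : 0 ≤ t := by positivity
    have hfl : (⌊t⌋₊:ℝ) ≤ t := Nat.floor_le ht0
    have hfu : t < (⌊t⌋₊:ℝ) + 1 := Nat.lt_floor_add_one t
    refine ⟨⌊t⌋₊ + 1, ?_, ?_, ?_⟩
    · have htn : t < n := by rw [ht]; nlinarith
      have := (Nat.floor_lt ht0).mpr htn
      omega
    · unfold xg
      push_cast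
      rw [lt_div_iff₀ hn']
      nlinarith
    · unfold xg
      push_cast
      rw [div_le_iff₀ hn']
      have h2 : (x + 2/(n:ℝ)) * n = x * n + 2 := by field_simp
      rw [h2]
      nlinarith

lemma laplace (β₀ : ℝ) (p : ℕ) (P : ℕ → ℕ → Prop) [inst : ∀ n k, Decidable (P n k)]
    (S : ℝ)
    (hub : ∀ n, 0 < n → ∀ k, k ≤ n → P n k → bahH β₀ p (xg n k) ≤ S)
    (hlb : ∀ ε, 0 < ε → ∀ᶠ n : ℕ in atTop, ∃ k, k ≤ n ∧ P n k ∧ S - ε ≤ bahH β₀ p (xg n k)) :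
    Tendsto (fun n : ℕ => (1 / (n:ℝ)) * Real.log
      (∑ k ∈ (Finset.range (n+1)).filter (fun k => P n k),
        (n.choose k : ℝ) * Real.exp ((n:ℝ) * (β₀ * (xg n k) ^ p))))
      atTop (nhds (Real.log 2 + S)) := by
  rw [Metric.tendsto_nhds]
  intro ε hε
  have hlog : Tendsto (fun n : ℕ => Real.log ((n:ℝ) + 1) / n) atTop (nhds 0) := by
    have h1 : Tendsto (fun n : ℕ => ((n:ℝ) + 1)) atTop atTop :=
      tendsto_atTop_add_const_right _ 1 tendsto_natCast_atTop_atTop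
    have h2 : Tendsto (fun x : ℝ => Real.log x / x) atTop (nhds 0) :=
      Real.isLittleO_log_id_atTop.tendsto_div_nhds_zero
    have h3 := h2.comp h1
    have h4 : Tendsto (fun n : ℕ => 1 + 1/(n:ℝ)) atTop (nhds 1) := by
      have := tendsto_one_div_atTop_nhds_zero_nat (𝕜 := ℝ)
      have := tendsto_const_nhds (x := (1:ℝ)) (f := atTop (α := ℕ)) |>.add this
      simpa using this
    have h5 := h4.mul h3
    rw [one_mul] at h5
    apply h5.congr'
    filter_upwards [eventually_ge_atTop 1] with n hn
    have hn' : (0:ℝ) < n := by exact_mod_cast hn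
    show (1 + 1/(n:ℝ)) * (Real.log ((n:ℝ)+1) / ((n:ℝ)+1)) = Real.log ((n:ℝ)+1) / n
    field_simp
  have hev1 := hlb (ε/4) (by linarith)
  have hev2 : ∀ᶠ n : ℕ in atTop, Real.log ((n:ℝ)+1)/(n:ℝ) < ε/4 :=
    hlog.eventually_lt_const (by linarith)
  filter_upwards [hev1, hev2, eventually_ge_atTop 1] with n hx hl hn1
  obtain ⟨k₀, hk₀n, hPk₀, hHk₀⟩ := hx
  have hn : 0 < n := hn1
  have hn' : (0:ℝ) < n := by exact_mod_cast hn
  have hlogpos : 0 ≤ Real.log ((n:ℝ)+1) := Real.log_nonneg (by linarith)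
  set F := (Finset.range (n+1)).filter (fun k => P n k) with hF
  set Sn := ∑ k ∈ F, (n.choose k : ℝ) * Real.exp ((n:ℝ) * (β₀ * (xg n k) ^ p)) with hSn
  have hterm : ∀ k ∈ F, (n.choose k : ℝ) * Real.exp ((n:ℝ) * (β₀ * (xg n k) ^ p)) ≤
      Real.exp ((n:ℝ) * (Real.log 2 + S)) := by
    intro k hk
    simp only [hF, Finset.mem_filter, Finset.mem_range] at hk
    have hkn : k ≤ n := by omega
    have h1 := choose_upper n k hn hkn
    have h2 : (n:ℝ) * (Real.log 2 - bahI (xg n k)) + (n:ℝ) * (β₀ * (xg n k) ^ p) =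
        (n:ℝ) * (Real.log 2 + bahH β₀ p (xg n k)) := by unfold bahH; ring
    calc (n.choose k : ℝ) * Real.exp ((n:ℝ) * (β₀ * (xg n k) ^ p))
        ≤ Real.exp ((n:ℝ) * (Real.log 2 - bahI (xg n k))) *
            Real.exp ((n:ℝ) * (β₀ * (xg n k) ^ p)) := by
          apply mul_le_mul_of_nonneg_right _ (Real.exp_nonneg _)
          exact h1
      _ = Real.exp ((n:ℝ) * (Real.log 2 + bahH β₀ p (xg n k))) := by
          rw [← Real.exp_add, h2]
      _ ≤ Real.exp ((n:ℝ) * (Real.log 2 + S)) := by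
          apply Real.exp_le_exp.mpr
          apply mul_le_mul_of_nonneg_left _ (le_of_lt hn')
          have := hub n hn k hkn hk.2
          linarith
  have hub' : Sn ≤ ((n:ℝ)+1) * Real.exp ((n:ℝ) * (Real.log 2 + S)) := by
    calc Sn ≤ ∑ _k ∈ F, Real.exp ((n:ℝ) * (Real.log 2 + S)) := Finset.sum_le_sum hterm
      _ = (F.card : ℝ) * Real.exp ((n:ℝ) * (Real.log 2 + S)) := by
          rw [Finset.sum_const, nsmul_eq_mul]
      _ ≤ ((n:ℝ)+1) * Real.exp ((n:ℝ) * (Real.log 2 + S)) := by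
          apply mul_le_mul_of_nonneg_right _ (Real.exp_nonneg _)
          have : F.card ≤ n + 1 := le_trans (Finset.card_filter_le _ _) (by simp)
          exact_mod_cast this
  have hlb' : Real.exp ((n:ℝ) * (Real.log 2 + (S - ε/4))) / ((n:ℝ)+1) ≤ Sn := by
    have hk₀F : k₀ ∈ F := by
      simp only [hF, Finset.mem_filter, Finset.mem_range]
      exact ⟨by omega, hPk₀⟩
    have h1 := choose_lower n k₀ hn hk₀n
    have h2 : (n:ℝ) * (Real.log 2 - bahI (xg n k₀)) + (n:ℝ) * (β₀ * (xg n k₀) ^ p) =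
        (n:ℝ) * (Real.log 2 + bahH β₀ p (xg n k₀)) := by unfold bahH; ring
    calc Real.exp ((n:ℝ) * (Real.log 2 + (S - ε/4))) / ((n:ℝ)+1)
        ≤ Real.exp ((n:ℝ) * (Real.log 2 + bahH β₀ p (xg n k₀))) / ((n:ℝ)+1) := by
          apply div_le_div_of_nonneg_right _ (by linarith)
          apply Real.exp_le_exp.mpr
          apply mul_le_mul_of_nonneg_left _ (le_of_lt hn')
          linarith
      _ = Real.exp ((n:ℝ) * (Real.log 2 - bahI (xg n k₀))) / ((n:ℝ)+1) *
            Real.exp ((n:ℝ) * (β₀ * (xg n k₀) ^ p)) := by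
          rw [div_mul_eq_mul_div, ← Real.exp_add, h2]
      _ ≤ (n.choose k₀ : ℝ) * Real.exp ((n:ℝ) * (β₀ * (xg n k₀) ^ p)) := by
          apply mul_le_mul_of_nonneg_right _ (Real.exp_nonneg _)
          rw [div_le_iff₀ (by linarith : (0:ℝ) < (n:ℝ)+1)]
          calc Real.exp ((n:ℝ) * (Real.log 2 - bahI (xg n k₀)))
              ≤ ((n:ℝ)+1) * (n.choose k₀ : ℝ) := h1
            _ = (n.choose k₀ : ℝ) * ((n:ℝ)+1) := mul_comm _ _
      _ ≤ Sn := by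
          apply Finset.single_le_sum (f := fun k =>
            (n.choose k : ℝ) * Real.exp ((n:ℝ) * (β₀ * (xg n k) ^ p))) _ hk₀F
          intro i _
          positivity
  have hSnpos : 0 < Sn := lt_of_lt_of_le (by positivity) hlb'
  have hlog_ub : Real.log Sn ≤ Real.log ((n:ℝ)+1) + (n:ℝ) * (Real.log 2 + S) := by
    calc Real.log Sn ≤ Real.log (((n:ℝ)+1) * Real.exp ((n:ℝ) * (Real.log 2 + S))) :=
          Real.log_le_log hSnpos hub'
      _ = Real.log ((n:ℝ)+1) + (n:ℝ) * (Real.log 2 + S) := by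
          rw [Real.log_mul (by linarith) (Real.exp_ne_zero _), Real.log_exp]
  have hlog_lb : (n:ℝ) * (Real.log 2 + (S - ε/4)) - Real.log ((n:ℝ)+1) ≤ Real.log Sn := by
    calc (n:ℝ) * (Real.log 2 + (S - ε/4)) - Real.log ((n:ℝ)+1)
        = Real.log (Real.exp ((n:ℝ) * (Real.log 2 + (S - ε/4))) / ((n:ℝ)+1)) := by
          rw [Real.log_div (Real.exp_ne_zero _) (by linarith), Real.log_exp]
      _ ≤ Real.log Sn := Real.log_le_log (by positivity) hlb'
  rw [Real.dist_eq, abs_lt]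
  constructor
  · have : (1/(n:ℝ)) * Real.log Sn ≥
        (Real.log 2 + (S - ε/4)) - Real.log ((n:ℝ)+1) / n := by
      rw [ge_iff_le, ← sub_nonneg]
      have : (1/(n:ℝ)) * Real.log Sn - ((Real.log 2 + (S - ε/4)) - Real.log ((n:ℝ)+1) / n) =
          (Real.log Sn - ((n:ℝ) * (Real.log 2 + (S - ε/4)) - Real.log ((n:ℝ)+1))) / n := by
        field_simp
      rw [this]
      apply div_nonneg _ (le_of_lt hn')
      linarith
    linarith
  · have : (1/(n:ℝ)) * Real.log Sn ≤ (Real.log 2 + S) + Real.log ((n:ℝ)+1) / n := by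
      rw [← sub_nonneg]
      have : ((Real.log 2 + S) + Real.log ((n:ℝ)+1) / n) - (1/(n:ℝ)) * Real.log Sn =
          ((Real.log ((n:ℝ)+1) + (n:ℝ) * (Real.log 2 + S)) - Real.log Sn) / n := by
        field_simp
        ring
      rw [this]
      apply div_nonneg _ (le_of_lt hn')
      linarith
    linarith


lemma expo_eq (β₀ : ℝ) (p n : ℕ) (hn : 0 < n) (s : ℝ) :
    β₀ * (n : ℝ) ^ (1 - (p : ℤ)) * s ^ p = (n:ℝ) * (β₀ * (s / n) ^ p) := by
  have hn' : (0:ℝ) < n := by exact_mod_cast hn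
  have hz : (n : ℝ) ^ (1 - (p : ℤ)) = (n:ℝ) / (n:ℝ)^p := by
    rw [zpow_sub₀ (ne_of_gt hn'), zpow_one, zpow_natCast]
  rw [hz, div_pow]
  field_simp

lemma mag_eq {n : ℕ} (σ : Fin n → Bool) : mag σ = xg n (cntB σ) := by
  unfold mag xg
  rw [sum_spin_eq]

lemma cw_eq (β₀ : ℝ) (p n : ℕ) (hn : 0 < n) (σ : Fin n → Bool) :
    cwWeight β₀ p n σ = Real.exp ((n:ℝ) * (β₀ * (xg n (cntB σ)) ^ p)) := by
  unfold cwWeight xg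
  rw [sum_spin_eq, expo_eq β₀ p n hn]

lemma den_eq (β₀ : ℝ) (p n : ℕ) (hn : 0 < n) :
    (∑ σ : Fin n → Bool, cwWeight β₀ p n σ) =
      ∑ k ∈ (Finset.range (n+1)).filter (fun _ => True),
        (n.choose k : ℝ) * Real.exp ((n:ℝ) * (β₀ * (xg n k) ^ p)) := by
  rw [Finset.filter_true]
  calc (∑ σ : Fin n → Bool, cwWeight β₀ p n σ)
      = ∑ σ : Fin n → Bool, (fun k => Real.exp ((n:ℝ) * (β₀ * (xg n k) ^ p))) (cntB σ) :=
        Finset.sum_congr rfl fun σ _ => cw_eq β₀ p n hn σ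
    _ = ∑ k ∈ Finset.range (n+1),
          (n.choose k : ℝ) * Real.exp ((n:ℝ) * (β₀ * (xg n k) ^ p)) :=
        sum_over_bool n (fun k => Real.exp ((n:ℝ) * (β₀ * (xg n k) ^ p)))

lemma num_eq (β₀ : ℝ) (p n : ℕ) (m : ℝ) (hn : 0 < n) :
    (∑ σ : Fin n → Bool, ({σ : Fin n → Bool | m < mag σ}).indicator (cwWeight β₀ p n) σ) =
      ∑ k ∈ (Finset.range (n+1)).filter (fun k => m < xg n k),
        (n.choose k : ℝ) * Real.exp ((n:ℝ) * (β₀ * (xg n k) ^ p)) := by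
  classical
  have step1 : ∀ σ : Fin n → Bool,
      ({σ : Fin n → Bool | m < mag σ}).indicator (cwWeight β₀ p n) σ =
        (fun k => if m < xg n k then Real.exp ((n:ℝ) * (β₀ * (xg n k) ^ p)) else 0)
          (cntB σ) := by
    intro σ
    rw [Set.indicator_apply]
    simp only [Set.mem_setOf_eq, mag_eq σ]
    split_ifs with h
    · exact cw_eq β₀ p n hn σ
    · rfl
  calc (∑ σ : Fin n → Bool, ({σ : Fin n → Bool | m < mag σ}).indicator (cwWeight β₀ p n) σ)
      = ∑ σ : Fin n → Bool,
          (fun k => if m < xg n k then Real.exp ((n:ℝ) * (β₀ * (xg n k) ^ p)) else 0)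
            (cntB σ) := Finset.sum_congr rfl fun σ _ => step1 σ
    _ = ∑ k ∈ Finset.range (n+1), (n.choose k : ℝ) *
          (if m < xg n k then Real.exp ((n:ℝ) * (β₀ * (xg n k) ^ p)) else 0) :=
        sum_over_bool n (fun k => if m < xg n k then Real.exp ((n:ℝ) * (β₀ * (xg n k) ^ p)) else 0)
    _ = ∑ k ∈ (Finset.range (n+1)).filter (fun k => m < xg n k),
          (n.choose k : ℝ) * Real.exp ((n:ℝ) * (β₀ * (xg n k) ^ p)) := by
        rw [Finset.sum_filter]
        refine Finset.sum_congr rfl fun k _ => ?_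
        split_ifs with h
        · rfl
        · rw [mul_zero]

lemma den_pos (β₀ : ℝ) (p n : ℕ) : 0 < ∑ σ : Fin n → Bool, cwWeight β₀ p n σ :=
  Finset.sum_pos (fun σ _ => Real.exp_pos _) Finset.univ_nonempty

lemma num_pos (β₀ : ℝ) (p n : ℕ) (m : ℝ) (hn : 0 < n) (hm : m < 1) :
    0 < ∑ σ : Fin n → Bool, ({σ : Fin n → Bool | m < mag σ}).indicator (cwWeight β₀ p n) σ := by
  classical
  rw [num_eq β₀ p n m hn]
  have hxgn : xg n n = 1 := by
    unfold xg
    have hn' : (0:ℝ) < n := by exact_mod_cast hn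
    field_simp
    ring
  apply Finset.sum_pos'
  · intro k _; positivity
  · refine ⟨n, ?_, ?_⟩
    · simp only [Finset.mem_filter, Finset.mem_range, hxgn]
      exact ⟨by omega, hm⟩
    · rw [hxgn]
      have : (0:ℝ) < (n.choose n : ℝ) := by simp
      positivity

lemma hlb_gen (β₀ : ℝ) (p : ℕ) (xs : ℝ) (hx0 : -1 ≤ xs) (hx1 : xs ≤ 1) (ε : ℝ) (hε : 0 < ε) :
    ∀ᶠ n : ℕ in atTop, ∃ k, k ≤ n ∧ (xs < xg n k ∨ xg n k = 1) ∧
      bahH β₀ p xs - ε ≤ bahH β₀ p (xg n k) := by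
  rcases lt_or_eq_of_le hx1 with hlt | heq
  · have hc : ContinuousAt (bahH β₀ p) xs := (bahH_continuous β₀ p).continuousAt
    rw [Metric.continuousAt_iff] at hc
    obtain ⟨δ, hδ0, hδ⟩ := hc ε hε
    have hev : ∀ᶠ n : ℕ in atTop, 2/(n:ℝ) < δ ∧ 0 < n := by
      have h2 : Tendsto (fun n : ℕ => 2/(n:ℝ)) atTop (nhds 0) := by
        simpa [div_eq_mul_inv] using ((tendsto_one_div_atTop_nhds_zero_nat (𝕜 := ℝ)).const_mul 2)
      exact (h2.eventually_lt_const hδ0).and (eventually_gt_atTop 0)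
    filter_upwards [hev] with n ⟨h2n, hn⟩
    obtain ⟨k, hkn, hk1, hk2⟩ := grid xs hx0 hlt n hn
    refine ⟨k, hkn, Or.inl hk1, ?_⟩
    have hdist : dist (xg n k) xs < δ := by
      rw [Real.dist_eq, abs_of_pos (by linarith)]
      linarith
    have := hδ hdist
    rw [Real.dist_eq, abs_lt] at this
    linarith
  · filter_upwards [eventually_gt_atTop 0] with n hn
    have hn' : (0:ℝ) < n := by exact_mod_cast hn
    have hxgn : xg n n = 1 := by
      unfold xg; field_simp; ring
    refine ⟨n, le_refl n, Or.inr hxgn, ?_⟩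
    rw [hxgn, ← heq]
    linarith

/-- For `p ≥ 2` and `β > β₀ > β*(p)`, with `m = m_*(β,p)` the positive global maximizer
of `H_{β,p}` on `[−1,1]`, under the `p`-tensor Curie–Weiss model `P_{β₀,p}`:
`(1/n) log P_{β₀,p}(X̄_n > m) → sup_{x ∈ (m,1]} H_{β₀,p}(x) − sup_{[−1,1]} H_{β₀,p}`,
and this limit is strictly negative. -/
theorem statement16 (p : ℕ) (hp : 2 ≤ p) (β β₀ : ℝ) (h0 : betaStar p < β₀) (h1 : β₀ < β)
    (m : ℝ) (hm0 : 0 < m) (hm1 : m ∈ Set.Icc (-1 : ℝ) 1)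
    (hmax : IsMaxOn (bahH β p) (Set.Icc (-1 : ℝ) 1) m) :
    Tendsto (fun n : ℕ =>
        (1 / (n : ℝ)) * Real.log (cwProb β₀ p n {σ : Fin n → Bool | m < mag σ}))
      atTop
      (nhds (sSup (bahH β₀ p '' Set.Ioc m 1) - sSup (bahH β₀ p '' Set.Icc (-1 : ℝ) 1))) ∧
    sSup (bahH β₀ p '' Set.Ioc m 1) - sSup (bahH β₀ p '' Set.Icc (-1 : ℝ) 1) < 0 := by
  classical
  have hβ0 : 0 ≤ β₀ := le_trans (betaStar_nonneg p) (le_of_lt h0)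
  have hβ : 0 ≤ β := by linarith
  have hmlt1 : m < 1 := max_lt_one β hβ p m hm1 hmax
  constructor
  · -- the limit
    obtain ⟨x₁, hx₁Icc, hx₁max, hx₁S⟩ := sup_Icc_attained β₀ p
    obtain ⟨x₂, hx₂Icc, hx₂S, hx₂max⟩ := sup_Ioc_attained β₀ p m hmlt1
    have hxg_mem : ∀ n, 0 < n → ∀ k, k ≤ n → xg n k ∈ Set.Icc (-1:ℝ) 1 := by
      intro n hn k hk
      have hn' : (0:ℝ) < n := by exact_mod_cast hn
      have hk' : (k:ℝ) ≤ n := by exact_mod_cast hk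
      constructor
      · unfold xg
        rw [le_div_iff₀ hn']
        have : (0:ℝ) ≤ k := by positivity
        linarith
      · unfold xg
        rw [div_le_iff₀ hn']
        linarith
    -- denominator
    have TD : Tendsto (fun n : ℕ => (1 / (n:ℝ)) * Real.log
        (∑ k ∈ (Finset.range (n+1)).filter (fun _ => True),
          (n.choose k : ℝ) * Real.exp ((n:ℝ) * (β₀ * (xg n k) ^ p))))
        atTop (nhds (Real.log 2 + sSup (bahH β₀ p '' Set.Icc (-1:ℝ) 1))) := by
      apply laplace β₀ p (fun _ _ => True) (sSup (bahH β₀ p '' Set.Icc (-1:ℝ) 1))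
      · intro n hn k hk _
        rw [hx₁S]
        exact hx₁max (hxg_mem n hn k hk)
      · intro ε hε
        filter_upwards [hlb_gen β₀ p x₁ hx₁Icc.1 hx₁Icc.2 ε hε] with n ⟨k, hkn, _, hk2⟩
        exact ⟨k, hkn, trivial, by rw [hx₁S]; exact hk2⟩
    -- numerator
    have TN : Tendsto (fun n : ℕ => (1 / (n:ℝ)) * Real.log
        (∑ k ∈ (Finset.range (n+1)).filter (fun k => m < xg n k),
          (n.choose k : ℝ) * Real.exp ((n:ℝ) * (β₀ * (xg n k) ^ p))))
        atTop (nhds (Real.log 2 + sSup (bahH β₀ p '' Set.Ioc m 1))) := by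
      apply laplace β₀ p (fun n k => m < xg n k) (sSup (bahH β₀ p '' Set.Ioc m 1))
      · intro n hn k hk hmk
        rw [hx₂S]
        exact hx₂max _ ⟨hmk, (hxg_mem n hn k hk).2⟩
      · intro ε hε
        filter_upwards [hlb_gen β₀ p x₂ (by linarith [hx₂Icc.1, hm0]) hx₂Icc.2 ε hε]
          with n ⟨k, hkn, hor, hk2⟩
        refine ⟨k, hkn, ?_, by rw [hx₂S]; exact hk2⟩
        rcases hor with h | h
        · exact lt_of_le_of_lt hx₂Icc.1 h
        · rw [h]; exact hmlt1
    have Tsub := TN.sub TD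
    rw [show (Real.log 2 + sSup (bahH β₀ p '' Set.Ioc m 1)) -
        (Real.log 2 + sSup (bahH β₀ p '' Set.Icc (-1:ℝ) 1)) =
        sSup (bahH β₀ p '' Set.Ioc m 1) - sSup (bahH β₀ p '' Set.Icc (-1:ℝ) 1) by ring] at Tsub
    apply Tsub.congr'
    filter_upwards [eventually_gt_atTop 0] with n hn
    have hnum := num_pos β₀ p n m hn hmlt1
    have hden := den_pos β₀ p n
    unfold cwProb
    rw [Real.log_div (ne_of_gt hnum) (ne_of_gt hden), mul_sub,
      num_eq β₀ p n m hn, den_eq β₀ p n hn]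
  · exact sub_neg.mpr (sup_lt p hp β β₀ h0 h1 m hm0 hm1 hmax)


end BahadurRao
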